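/- When d is odd, the antisymmetric d×d matrix Ω with Ω_{pq} = sign(q-p) has rank d-1, its image is the hyperplane H = {v : Σ_p (-1)^p v_p = 0}, and its kernel is spanned by the vector h* = Σ_p (-1)^p e_p. -/

import Mathlib

/-- The antisymmetric matrix `Ω` with `Ω p q = sign (q - p)`. -/
def Omega (d : ℕ) : Matrix (Fin d) (Fin d) ℤ :=
  Matrix.of fun p q => if p < q then 1 else if q < p then -1 else 0

/-- The alternating vector `h* = Σ_p (-1)^p e_p`. -/
def hstar (d : ℕ) : Fin d → ℤ := fun p => (-1) ^ (p : ℕ)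

namespace OmegaAux

open Finset

variable {d : ℕ}

/-- Extension of a `Fin d`-indexed vector to `ℕ`, by zero. -/
def ext (v : Fin d → ℤ) (i : ℕ) : ℤ := if h : i < d then v ⟨i, h⟩ else 0

lemma ext_lt (v : Fin d → ℤ) {i : ℕ} (h : i < d) : ext v i = v ⟨i, h⟩ := dif_pos h

lemma ext_fin (v : Fin d → ℤ) (q : Fin d) : ext v (q : ℕ) = v q := by
  rw [ext_lt v q.2]

lemma omega_antisymm (p q : Fin d) : Omega d p q = -Omega d q p := by
  rcases lt_trichotomy p q with h | h | h
  · simp [Omega, h, not_lt.mpr h.le, h.not_gt]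
  · simp [Omega, h]
  · simp [Omega, h, not_lt.mpr h.le, h.not_gt]

lemma omega_mul (p q : Fin d) (x : ℤ) :
    Omega d p q * x = x - 2 * (if q ≤ p then x else 0) + (if q = p then x else 0) := by
  rcases lt_trichotomy p q with h | h | h
  · simp [Omega, h, not_le.mpr h, (Fin.ne_of_lt h).symm]
  · simp [Omega, h]
    ring
  · simp [Omega, h, h.le, h.not_gt, not_lt.mpr h.le, Fin.ne_of_lt h]
    ring

lemma sum_ite_le (u : Fin d → ℤ) (p : Fin d) :
    (∑ q : Fin d, if q ≤ p then u q else 0) = ∑ i ∈ Finset.range ((p : ℕ) + 1), ext u i := by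
  have h1 : (∑ q : Fin d, if q ≤ p then u q else 0)
      = ∑ i ∈ Finset.range d, (if i < (p : ℕ) + 1 then ext u i else 0) := by
    rw [← Fin.sum_univ_eq_sum_range (fun i => if i < (p : ℕ) + 1 then ext u i else 0) d]
    refine Finset.sum_congr rfl fun q _ => ?_
    by_cases h : q ≤ p
    · rw [if_pos h, if_pos (Nat.lt_succ_of_le (Fin.le_def.mp h)), ext_fin]
    · rw [if_neg h, if_neg]
      intro hc
      exact h (Fin.le_def.mpr (Nat.lt_succ_iff.mp hc))
  rw [h1]
  rw [← Finset.sum_subset (Finset.range_subset_range.mpr (show (p : ℕ) + 1 ≤ d from p.2))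
    (fun x _ hx => by rw [if_neg]; simpa using hx)]
  exact Finset.sum_congr rfl fun i hi => if_pos (Finset.mem_range.mp hi)

lemma sum_univ_ext (u : Fin d → ℤ) :
    ∑ q : Fin d, u q = ∑ i ∈ Finset.range d, ext u i := by
  rw [← Fin.sum_univ_eq_sum_range (ext u) d]
  exact Finset.sum_congr rfl fun q _ => (ext_fin u q).symm

/-- Key formula: `(Ω u)_p = T - 2 * (partial sum up to p) + u p`. -/
lemma mulVec_eq (u : Fin d → ℤ) (p : Fin d) :
    (Omega d).mulVec u p
      = (∑ i ∈ Finset.range d, ext u i)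
        - 2 * (∑ i ∈ Finset.range ((p : ℕ) + 1), ext u i) + u p := by
  have : (Omega d).mulVec u p = ∑ q : Fin d, Omega d p q * u q := by
    simp [Matrix.mulVec, dotProduct]
  rw [this]
  have : ∑ q : Fin d, Omega d p q * u q
      = ∑ q : Fin d, (u q - 2 * (if q ≤ p then u q else 0) + (if q = p then u q else 0)) := by
    exact Finset.sum_congr rfl fun q _ => omega_mul p q (u q)
  rw [this, Finset.sum_add_distrib, Finset.sum_sub_distrib, ← Finset.mul_sum,
    sum_ite_le, sum_univ_ext]
  congr 1
  simp

lemma two_mul_sum_pow (n : ℕ) :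
    2 * (∑ i ∈ Finset.range n, (-1 : ℤ) ^ i) = 1 - (-1) ^ n := by
  induction n with
  | zero => simp
  | succ n ih =>
    rw [Finset.sum_range_succ, mul_add, ih, pow_succ]
    ring

lemma hstar_ker (hd : Odd d) : (Omega d).mulVec (hstar d) = 0 := by
  funext p
  rw [mulVec_eq]
  have he : ∀ n, n ≤ d → ∑ i ∈ Finset.range n, ext (hstar d) i
      = ∑ i ∈ Finset.range n, (-1 : ℤ) ^ i := by
    intro n hn
    refine Finset.sum_congr rfl fun i hi => ?_
    have : i < d := lt_of_lt_of_le (Finset.mem_range.mp hi) hn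
    rw [ext_lt _ this]; rfl
  have h1 := two_mul_sum_pow d
  have h2 := two_mul_sum_pow ((p : ℕ) + 1)
  rw [he d le_rfl, he ((p : ℕ) + 1) p.2]
  have hdo : (-1 : ℤ) ^ d = -1 := Odd.neg_one_pow hd
  have hp1 : (-1 : ℤ) ^ ((p : ℕ) + 1) = -(-1) ^ (p : ℕ) := by rw [pow_succ]; ring
  rw [hdo] at h1
  rw [hp1] at h2
  have : hstar d p = (-1 : ℤ) ^ (p : ℕ) := rfl
  rw [this]
  set T := ∑ i ∈ Finset.range d, (-1 : ℤ) ^ i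
  set S := ∑ i ∈ Finset.range ((p : ℕ) + 1), (-1 : ℤ) ^ i
  set y := (-1 : ℤ) ^ (p : ℕ)
  have : (0 : Fin d → ℤ) p = 0 := rfl
  rw [this]
  linarith

lemma alt_sum_mulVec (hd : Odd d) (w : Fin d → ℤ) :
    ∑ p : Fin d, (-1 : ℤ) ^ (p : ℕ) * (Omega d).mulVec w p = 0 := by
  have hker := hstar_ker hd
  have : ∀ q : Fin d, (Omega d).mulVec (hstar d) q = 0 := fun q => by
    rw [hker]; rfl
  calc ∑ p : Fin d, (-1 : ℤ) ^ (p : ℕ) * (Omega d).mulVec w p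
      = ∑ p : Fin d, ∑ q : Fin d, (-1 : ℤ) ^ (p : ℕ) * (Omega d p q * w q) := by
        refine Finset.sum_congr rfl fun p _ => ?_
        rw [← Finset.mul_sum]
        congr 1
    _ = ∑ q : Fin d, ∑ p : Fin d, (-1 : ℤ) ^ (p : ℕ) * (Omega d p q * w q) :=
        Finset.sum_comm
    _ = ∑ q : Fin d, -((Omega d).mulVec (hstar d) q) * w q := by
        refine Finset.sum_congr rfl fun q _ => ?_
        have : (Omega d).mulVec (hstar d) q = ∑ p : Fin d, Omega d q p * (-1 : ℤ) ^ (p : ℕ) := by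
          simp [Matrix.mulVec, dotProduct, hstar]
        rw [this, ← Finset.sum_neg_distrib, Finset.sum_mul]
        refine Finset.sum_congr rfl fun p _ => ?_
        rw [omega_antisymm p q]
        ring
    _ = 0 := by
        refine Finset.sum_eq_zero fun q _ => ?_
        rw [this q]; ring

/-- The alternating-sum hyperplane, as a submodule. -/
def altKer (d : ℕ) : Submodule ℤ (Fin d → ℤ) where
  carrier := {v | ∑ p : Fin d, (-1) ^ (p : ℕ) * v p = 0}
  add_mem' := by
    intro a b ha hb
    simp only [Set.mem_setOf_eq] at *
    simp only [Pi.add_apply, mul_add, Finset.sum_add_distrib, ha, hb, add_zero]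
  zero_mem' := by simp
  smul_mem' := by
    intro c v hv
    simp only [Set.mem_setOf_eq] at *
    simp only [Pi.smul_apply, smul_eq_mul]
    calc ∑ p : Fin d, (-1 : ℤ) ^ (p : ℕ) * (c * v p)
        = c * ∑ p : Fin d, (-1 : ℤ) ^ (p : ℕ) * v p := by
          rw [Finset.mul_sum]; exact Finset.sum_congr rfl fun p _ => by ring
      _ = 0 := by rw [hv, mul_zero]

/-- Explicit preimage: for `v` in the hyperplane, `Ω (preim v) = v`. -/
def preim (v : Fin d → ℤ) : Fin d → ℤ := fun q =>
  (-1) ^ (q : ℕ) * ext v 0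
    - 2 * (-1) ^ (q : ℕ) * (∑ i ∈ Finset.range ((q : ℕ) + 1), (-1) ^ i * ext v i) + v q

lemma preim_spec (hdo : Odd d) (hd : 0 < d) (v : Fin d → ℤ)
    (hv : ∑ p : Fin d, (-1 : ℤ) ^ (p : ℕ) * v p = 0) :
    (Omega d).mulVec (preim v) = v := by
  set A : ℕ → ℤ := fun m => ∑ i ∈ Finset.range m, (-1) ^ i * ext v i with hA
  have hAd : A d = 0 := by
    have h1 : A d = ∑ p : Fin d, (-1 : ℤ) ^ (p : ℕ) * v p := by
      simp only [hA]
      rw [← Fin.sum_univ_eq_sum_range (fun i => (-1 : ℤ) ^ i * ext v i) d]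
      exact Finset.sum_congr rfl fun q _ => by rw [ext_fin]
    rw [h1, hv]
  have hw : ∀ i, i < d → ext (preim v) i
      = (-1) ^ i * ext v 0 - 2 * (-1) ^ i * A (i + 1) + ext v i := by
    intro i hi
    rw [ext_lt _ hi]
    simp only [preim]
    rw [ext_lt _ hi]
  -- partial sums of preim
  have hsq : ∀ m : ℕ, (-1 : ℤ) ^ m * (-1) ^ m = 1 := by
    intro m
    rw [← pow_add]
    exact Even.neg_one_pow ⟨m, by ring⟩
  have hS : ∀ m, m ≤ d → ∑ i ∈ Finset.range m, ext (preim v) i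
      = ext v 0 * (∑ i ∈ Finset.range m, (-1 : ℤ) ^ i) + (-1) ^ m * A m := by
    intro m hm
    induction m with
    | zero => simp [hA]
    | succ m ih =>
      rw [Finset.sum_range_succ, ih (le_of_lt hm), Finset.sum_range_succ,
        hw m (by omega)]
      have hAm : A (m + 1) = A m + (-1) ^ m * ext v m := by
        simp only [hA, Finset.sum_range_succ]
      rw [hAm]
      have h1 := hsq m
      set y := (-1 : ℤ) ^ m
      have hy : (-1 : ℤ) ^ (m + 1) = -y := by rw [pow_succ]; ring
      rw [hy]
      linear_combination (-(ext v m)) * h1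
  funext p
  rw [mulVec_eq]
  rw [hS d le_rfl, hS ((p : ℕ) + 1) p.2]
  have hT := two_mul_sum_pow d
  have hP := two_mul_sum_pow ((p : ℕ) + 1)
  have hdo' : (-1 : ℤ) ^ d = -1 := Odd.neg_one_pow hdo
  rw [hdo'] at hT
  have hp1 : (-1 : ℤ) ^ ((p : ℕ) + 1) = -(-1) ^ (p : ℕ) := by rw [pow_succ]; ring
  rw [hp1] at hP ⊢
  rw [hAd]
  simp only [preim]
  set y := (-1 : ℤ) ^ (p : ℕ)
  set T := ∑ i ∈ Finset.range d, (-1 : ℤ) ^ i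
  set S := ∑ i ∈ Finset.range ((p : ℕ) + 1), (-1 : ℤ) ^ i
  have hap : A ((p : ℕ) + 1) = ∑ i ∈ Finset.range ((p : ℕ) + 1), (-1) ^ i * ext v i := rfl
  rw [← hap]
  have hT1 : T = 1 := by linarith
  rw [hT1]
  linear_combination (-(ext v 0)) * hP

end OmegaAux

open OmegaAux in
/-- For `d` odd, `Ω` has rank `d-1`, its image is the hyperplane
`{v : Σ_p (-1)^p v_p = 0}`, and its kernel is spanned by `h*`. -/
theorem omega_rank_image_kernel_of_odd (d : ℕ) (hd : 3 ≤ d) (ho : Odd d) :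
    (Omega d).rank = d - 1 ∧
    Set.range (Omega d).mulVec = {v : Fin d → ℤ | ∑ p : Fin d, (-1) ^ (p : ℕ) * v p = 0} ∧
    (∀ v : Fin d → ℤ, (Omega d).mulVec v = 0 ↔ ∃ c : ℤ, v = c • hstar d) := by
  have hd0 : 0 < d := by omega
  -- image
  have himg : Set.range (Omega d).mulVec
      = {v : Fin d → ℤ | ∑ p : Fin d, (-1) ^ (p : ℕ) * v p = 0} := by
    ext v
    constructor
    · rintro ⟨w, rfl⟩
      exact alt_sum_mulVec ho w
    · intro hv
      exact ⟨preim v, preim_spec ho hd0 v hv⟩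
  -- kernel
  have hker : ∀ v : Fin d → ℤ, (Omega d).mulVec v = 0 ↔ ∃ c : ℤ, v = c • hstar d := by
    intro v
    constructor
    · intro hv
      have key : ∀ p : Fin d, v p
          = 2 * (∑ i ∈ Finset.range ((p : ℕ) + 1), ext v i)
            - (∑ i ∈ Finset.range d, ext v i) := by
        intro p
        have := mulVec_eq v p
        rw [hv] at this
        have h0 : (0 : Fin d → ℤ) p = 0 := rfl
        rw [h0] at this
        linarith
      have hind : ∀ i, ∀ h : i < d, v ⟨i, h⟩ = (-1) ^ i * v ⟨0, hd0⟩ := by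
        intro i
        induction i with
        | zero => intro h; simp
        | succ i ih =>
          intro h
          have hi : i < d := by omega
          have h1 := key ⟨i, hi⟩
          have h2 := key ⟨i + 1, h⟩
          simp only at h1 h2
          rw [Finset.sum_range_succ (f := ext v) (n := i + 1)] at h2
          have he : ext v (i + 1) = v ⟨i + 1, h⟩ := ext_lt v h
          rw [he] at h2
          have : v ⟨i + 1, h⟩ = -v ⟨i, hi⟩ := by linarith
          rw [this, ih hi, pow_succ]
          ring
      refine ⟨v ⟨0, hd0⟩, funext fun p => ?_⟩
      have := hind (p : ℕ) p.2
      have hp : (⟨(p : ℕ), p.2⟩ : Fin d) = p := rfl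
      rw [hp] at this
      rw [this]
      simp [hstar, mul_comm]
    · rintro ⟨c, rfl⟩
      rw [Matrix.mulVec_smul, hstar_ker ho, smul_zero]
  refine ⟨?_, himg, hker⟩
  -- rank
  obtain ⟨n, rfl⟩ : ∃ n, d = n + 1 := ⟨d - 1, by omega⟩
  have hn : Even n := by
    rcases ho with ⟨k, hk⟩
    exact ⟨k, by omega⟩
  have hrange : LinearMap.range (Omega (n + 1)).mulVecLin = altKer (n + 1) := by
    apply Submodule.ext
    intro v
    rw [LinearMap.mem_range]
    constructor
    · rintro ⟨w, rfl⟩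
      rw [Matrix.mulVecLin_apply]
      exact alt_sum_mulVec ho w
    · intro hv
      exact ⟨preim v, by rw [Matrix.mulVecLin_apply]; exact preim_spec ho hd0 v hv⟩
  have hmem : ∀ u : Fin n → ℤ,
      (Fin.snoc u (-∑ j : Fin n, (-1) ^ (j : ℕ) * u j) : Fin (n + 1) → ℤ)
        ∈ altKer (n + 1) := by
    intro u
    show ∑ p : Fin (n + 1), (-1 : ℤ) ^ (p : ℕ)
        * (Fin.snoc u (-∑ j : Fin n, (-1) ^ (j : ℕ) * u j) : Fin (n + 1) → ℤ) p = 0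
    rw [Fin.sum_univ_castSucc]
    have h1 : ∀ j : Fin n, (-1 : ℤ) ^ ((Fin.castSucc j : Fin (n + 1)) : ℕ)
        * (Fin.snoc u (-∑ j : Fin n, (-1) ^ (j : ℕ) * u j) : Fin (n + 1) → ℤ) (Fin.castSucc j)
        = (-1) ^ (j : ℕ) * u j := by
      intro j
      rw [Fin.snoc_castSucc]
      rfl
    rw [Finset.sum_congr rfl fun j _ => h1 j]
    have h2 : ((Fin.last n : Fin (n + 1)) : ℕ) = n := rfl
    rw [h2, Fin.snoc_last, Even.neg_one_pow hn]
    ring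
  -- every member of altKer has its last entry determined by the others
  have hlast : ∀ x : Fin (n + 1) → ℤ, x ∈ altKer (n + 1) →
      x (Fin.last n) = -∑ j : Fin n, (-1 : ℤ) ^ (j : ℕ) * x (Fin.castSucc j) := by
    intro x hx
    have hx' : ∑ p : Fin (n + 1), (-1 : ℤ) ^ (p : ℕ) * x p = 0 := hx
    rw [Fin.sum_univ_castSucc] at hx'
    have h2 : ((Fin.last n : Fin (n + 1)) : ℕ) = n := rfl
    rw [h2, Even.neg_one_pow hn, one_mul] at hx'
    have h3 : ∀ j : Fin n, (-1 : ℤ) ^ ((Fin.castSucc j : Fin (n + 1)) : ℕ) * x (Fin.castSucc j)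
        = (-1 : ℤ) ^ (j : ℕ) * x (Fin.castSucc j) := fun j => rfl
    rw [Finset.sum_congr rfl fun j _ => h3 j] at hx'
    linarith
  let r : altKer (n + 1) →ₗ[ℤ] (Fin n → ℤ) :=
    (LinearMap.funLeft ℤ ℤ Fin.castSucc).comp (altKer (n + 1)).subtype
  have hr : ∀ (x : altKer (n + 1)) (j : Fin n), r x j = x.1 (Fin.castSucc j) := fun _ _ => rfl
  have hbij : Function.Bijective r := by
    constructor
    · intro x y hxy
      apply Subtype.ext
      funext p
      refine Fin.lastCases ?_ (fun j => ?_) p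
      · rw [hlast x.1 x.2, hlast y.1 y.2]
        congr 1
        refine Finset.sum_congr rfl fun j _ => ?_
        rw [← hr x j, ← hr y j, hxy]
      · rw [← hr x j, ← hr y j, hxy]
    · intro u
      refine ⟨⟨Fin.snoc u (-∑ j : Fin n, (-1) ^ (j : ℕ) * u j), hmem u⟩, ?_⟩
      funext j
      rw [hr]
      simp
  have e : altKer (n + 1) ≃ₗ[ℤ] (Fin n → ℤ) := LinearEquiv.ofBijective r hbij
  rw [Matrix.rank, hrange, e.finrank_eq, Module.finrank_fin_fun]
  omega
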